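/- For every sequence of integers (aₙ)_{n≥1} there exists a sequence of integers (bₙ)_{n≥1} such that, in the ring ℤ[[q]] of formal power series, 1 + Σ_{n=1}^∞ aₙ qⁿ = Π_{n=1}^∞ (1 − qⁿ)^{bₙ}; precisely, for every N ≥ 1 the power series 1 + Σ_{n=1}^∞ aₙ qⁿ is congruent to the finite product Π_{n=1}^N (1 − qⁿ)^{bₙ} modulo q^{N+1}, where for negative exponents (1 − qⁿ)^{bₙ} denotes the corresponding power of the inverse of the unit 1 − qⁿ in ℤ[[q]]. -/

import Mathlib

open PowerSeries

/-- For `n ≥ 1`, the power series `1 - qⁿ` is a unit of `ℤ[[q]]` (its constant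
coefficient is `1`).  Here we index by `n - 1`, i.e. `oneSubPowUnit n = 1 - q^(n+1)`. -/
noncomputable def oneSubPowUnit (n : ℕ) : (PowerSeries ℤ)ˣ :=
  (PowerSeries.isUnit_iff_constantCoeff.mpr (by simp : IsUnit
    (constantCoeff (R := ℤ) (1 - (X : PowerSeries ℤ) ^ (n + 1))))).unit

lemma oneSubPowUnit_val (n : ℕ) :
    ((oneSubPowUnit n : (PowerSeries ℤ)ˣ) : PowerSeries ℤ) = 1 - X ^ (n + 1) := rfl

lemma key (n : ℕ) (b : ℤ) : ∃ r : PowerSeries ℤ,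
    ((oneSubPowUnit n ^ b : (PowerSeries ℤ)ˣ) : PowerSeries ℤ)
      = 1 - (C b) * X ^ (n + 1) + X ^ (n + 1) * X * r := by
  have hinv : (((oneSubPowUnit n)⁻¹ : (PowerSeries ℤ)ˣ) : PowerSeries ℤ) * (1 - X ^ (n+1)) = 1 := by
    rw [← oneSubPowUnit_val]; exact_mod_cast (oneSubPowUnit n).inv_mul
  set v : PowerSeries ℤ := (((oneSubPowUnit n)⁻¹ : (PowerSeries ℤ)ˣ) : PowerSeries ℤ) with hv
  induction b using Int.induction_on with
  | zero => exact ⟨0, by simp⟩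
  | succ k ih =>
    obtain ⟨r, hr⟩ := ih
    refine ⟨r + (C (k:ℤ)) * X ^ n - X ^ (n+1) * r, ?_⟩
    rw [zpow_add_one, Units.val_mul, hr, oneSubPowUnit_val]
    simp only [map_add, map_one, map_natCast]
    ring
  | pred k ih =>
    obtain ⟨r, hr⟩ := ih
    have hvv : v = 1 + X ^ (n+1) + X ^ (n+1) * X * (X ^ n * v) := by
      linear_combination (1 + (X:PowerSeries ℤ) ^ (n+1)) * hinv
    refine ⟨X ^ n * v + r + (k : PowerSeries ℤ) * X ^ n
      + (k : PowerSeries ℤ) * X ^ (n+1) * (X ^ n * v)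
      + X ^ (n+1) * r + X ^ (n+2) * r * (X ^ n * v), ?_⟩
    rw [zpow_sub_one, Units.val_mul, ← hv]
    simp only [map_sub, map_neg, map_one, map_natCast] at hr ⊢
    linear_combination v * hr
      + (1 + (k : PowerSeries ℤ) * X ^ (n+1) + X ^ (n+1) * X * r) * hvv

noncomputable def prodUpTo (a : ℕ → ℤ) : ℕ → (PowerSeries ℤ)ˣ
  | 0 => 1
  | n+1 => prodUpTo a n * oneSubPowUnit n ^
      ((coeff (R := ℤ) (n+1)) ((prodUpTo a n : (PowerSeries ℤ)ˣ) : PowerSeries ℤ) - a (n+1))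

noncomputable def bSeq (a : ℕ → ℤ) : ℕ → ℤ
  | 0 => 0
  | n+1 => (coeff (R := ℤ) (n+1)) ((prodUpTo a n : (PowerSeries ℤ)ˣ) : PowerSeries ℤ) - a (n+1)

lemma prod_eq (a : ℕ → ℤ) (N : ℕ) :
    (∏ j ∈ Finset.range N, oneSubPowUnit j ^ bSeq a (j+1)) = prodUpTo a N := by
  induction N with
  | zero => simp [prodUpTo]
  | succ n ih => rw [Finset.prod_range_succ, ih, prodUpTo, bSeq]

lemma constP (a : ℕ → ℤ) (N : ℕ) :
    constantCoeff (R := ℤ) ((prodUpTo a N : (PowerSeries ℤ)ˣ) : PowerSeries ℤ) = 1 := by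
  induction N with
  | zero => simp [prodUpTo]
  | succ n ih =>
    obtain ⟨r, hr⟩ := key n
      ((coeff (R := ℤ) (n+1)) ((prodUpTo a n : (PowerSeries ℤ)ˣ) : PowerSeries ℤ) - a (n+1))
    rw [prodUpTo, Units.val_mul, map_mul, ih, hr]
    simp

lemma invariant (a : ℕ → ℤ) (N : ℕ) : ∀ d : ℕ, d ≤ N →
    (coeff (R := ℤ) d) (PowerSeries.mk (fun n => if n = 0 then 1 else a n)) =
    (coeff (R := ℤ) d) ((prodUpTo a N : (PowerSeries ℤ)ˣ) : PowerSeries ℤ) := by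
  induction N with
  | zero =>
    intro d hd
    interval_cases d
    simp [prodUpTo, coeff_zero_eq_constantCoeff]
  | succ n ih =>
    intro d hd
    obtain ⟨r, hr⟩ := key n
      ((coeff (R := ℤ) (n+1)) ((prodUpTo a n : (PowerSeries ℤ)ˣ) : PowerSeries ℤ) - a (n+1))
    have hval : ((prodUpTo a (n+1) : (PowerSeries ℤ)ˣ) : PowerSeries ℤ)
        = ((prodUpTo a n : (PowerSeries ℤ)ˣ) : PowerSeries ℤ)
          - (C ((coeff (R := ℤ) (n+1)) ((prodUpTo a n : (PowerSeries ℤ)ˣ) : PowerSeries ℤ) - a (n+1))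
              * ((prodUpTo a n : (PowerSeries ℤ)ˣ) : PowerSeries ℤ)) * X ^ (n+1)
          + (X * r * ((prodUpTo a n : (PowerSeries ℤ)ˣ) : PowerSeries ℤ)) * X ^ (n+1) := by
      rw [prodUpTo, Units.val_mul, hr]; ring
    rw [hval, map_add, map_sub, coeff_mul_X_pow', coeff_mul_X_pow']
    rcases Nat.lt_or_ge d (n+1) with hlt | hge
    · rw [if_neg (by omega), if_neg (by omega), sub_zero, add_zero]
      exact ih d (by omega)
    · have hde : d = n + 1 := le_antisymm hd hge
      subst hde
      rw [if_pos le_rfl, if_pos le_rfl]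
      simp only [Nat.sub_self, coeff_zero_eq_constantCoeff, map_mul, constantCoeff_C,
        constantCoeff_X, zero_mul, mul_zero, add_zero, constP a n, mul_one, coeff_mk]
      rw [if_neg (by omega)]
      ring

/-- For every sequence of integers `(aₙ)` there is a sequence of integers `(bₙ)` such that
`1 + Σ_{n≥1} aₙ qⁿ = Π_{n≥1} (1 - qⁿ)^{bₙ}` in `ℤ[[q]]`: for every `N ≥ 1` the series
`1 + Σ aₙ qⁿ` agrees with the finite product `Π_{n=1}^{N} (1 - qⁿ)^{bₙ}` in all
coefficients of degree `≤ N`. -/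
theorem exists_integer_exponents_infinite_product (a : ℕ → ℤ) :
    ∃ b : ℕ → ℤ, ∀ N : ℕ, 1 ≤ N → ∀ d : ℕ, d ≤ N →
      (PowerSeries.coeff (R := ℤ) d) (PowerSeries.mk (fun n => if n = 0 then 1 else a n)) =
      (PowerSeries.coeff (R := ℤ) d)
        ((∏ j ∈ Finset.range N, (oneSubPowUnit j ^ b (j + 1)) : (PowerSeries ℤ)ˣ) :
          PowerSeries ℤ) := by
  refine ⟨bSeq a, fun N _ d hd => ?_⟩
  rw [prod_eq]
  exact invariant a N d hd
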